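/- Let u, v be non-adjacent vertices in graph G. In the RAND construction — where each vertex is independently placed in A or B with probability 1/2, and a uniformly random permutation π of V is chosen independently — the probability that u ∈ A, v ∈ B, and max{π(x) : x ∈ N(u) ∩ B} > π(v) is at most (1/4)·d(u)/(d(u)+1), where d(u) = |N(u)| (with max over the empty set treated as making the event false). -/
import Mathlib

open Finset

private lemma flip_card {n : ℕ} (w : Fin n) (p q : Finset (Fin n) → Prop)
    [DecidablePred p] [DecidablePred q]
    (h : ∀ A, q (symmDiff A {w}) ↔ p A) :
    (univ.filter p).card = (univ.filter q).card := by
  classical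
  have hcan : ∀ A : Finset (Fin n), symmDiff (symmDiff A {w}) {w} = A :=
    fun A => symmDiff_symmDiff_cancel_right {w} A
  have hinj : Function.Injective (fun A : Finset (Fin n) => symmDiff A {w}) :=
    Function.LeftInverse.injective
      (g := fun A : Finset (Fin n) => symmDiff A {w}) hcan
  have himg : (univ.filter q) = (univ.filter p).image (fun A => symmDiff A {w}) := by
    ext B
    simp only [mem_image, mem_filter, mem_univ, true_and]
    constructor
    · intro hB
      refine ⟨symmDiff B {w}, ?_, hcan B⟩
      rw [← h, hcan B]; exact hB
    · rintro ⟨A, hA, rfl⟩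
      exact (h A).2 hA
  rw [himg, card_image_of_injective _ hinj]

private lemma finset_count {n : ℕ} (u v : Fin n) (huv : u ≠ v) :
    4 * (univ.filter fun A : Finset (Fin n) => u ∈ A ∧ v ∉ A).card = 2 ^ n := by
  classical
  have memu : ∀ (A : Finset (Fin n)), (u ∈ symmDiff A {u} ↔ u ∉ A) := by
    intro A; simp [Finset.mem_symmDiff]
  have memv : ∀ (A : Finset (Fin n)), (v ∈ symmDiff A {u} ↔ v ∈ A) := by
    intro A; simp [Finset.mem_symmDiff, huv.symm]
  have memv' : ∀ (A : Finset (Fin n)), (v ∈ symmDiff A {v} ↔ v ∉ A) := by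
    intro A; simp [Finset.mem_symmDiff]
  have memu' : ∀ (A : Finset (Fin n)), (u ∈ symmDiff A {v} ↔ u ∈ A) := by
    intro A; simp [Finset.mem_symmDiff, huv]
  -- the four classes all have the same cardinality
  have e12 : (univ.filter fun A : Finset (Fin n) => u ∈ A ∧ v ∉ A).card =
      (univ.filter fun A : Finset (Fin n) => u ∉ A ∧ v ∉ A).card := by
    apply flip_card u
    intro A
    rw [memu A, memv A]
    tauto
  have e13 : (univ.filter fun A : Finset (Fin n) => u ∈ A ∧ v ∉ A).card =
      (univ.filter fun A : Finset (Fin n) => u ∈ A ∧ v ∈ A).card := by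
    apply flip_card v
    intro A
    rw [memu' A, memv' A]
  have e14 : (univ.filter fun A : Finset (Fin n) => u ∈ A ∧ v ∉ A).card =
      (univ.filter fun A : Finset (Fin n) => u ∉ A ∧ v ∈ A).card := by
    rw [e13]
    apply flip_card u
    intro A
    rw [memu A, memv A]
    tauto
  -- splitting
  have su : (univ.filter fun A : Finset (Fin n) => u ∈ A ∧ v ∈ A).card +
      (univ.filter fun A : Finset (Fin n) => u ∈ A ∧ v ∉ A).card =
      (univ.filter fun A : Finset (Fin n) => u ∈ A).card := by
    rw [← filter_filter, ← filter_filter]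
    exact card_filter_add_card_filter_not (fun A => v ∈ A)
  have su' : (univ.filter fun A : Finset (Fin n) => u ∉ A ∧ v ∈ A).card +
      (univ.filter fun A : Finset (Fin n) => u ∉ A ∧ v ∉ A).card =
      (univ.filter fun A : Finset (Fin n) => u ∉ A).card := by
    rw [← filter_filter, ← filter_filter]
    exact card_filter_add_card_filter_not (fun A => v ∈ A)
  have stot : (univ.filter fun A : Finset (Fin n) => u ∈ A).card +
      (univ.filter fun A : Finset (Fin n) => u ∉ A).card = 2 ^ n := by
    rw [card_filter_add_card_filter_not (fun A => u ∈ A), card_univ,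
      Fintype.card_finset, Fintype.card_fin]
  omega

private lemma perm_count {n : ℕ} (G : SimpleGraph (Fin n)) [DecidableRel G.Adj]
    (u v : Fin n) (hnadj : ¬ G.Adj u v) :
    Fintype.card (Equiv.Perm (Fin n)) ≤ (G.degree u + 1) *
      (univ.filter fun π : Equiv.Perm (Fin n) => ∀ x, G.Adj u x → π x ≤ π v).card := by
  classical
  set S : Finset (Fin n) := insert v (G.neighborFinset u) with hS
  have hvS : v ∈ S := mem_insert_self _ _
  have hSne : S.Nonempty := ⟨v, hvS⟩
  have hvnb : v ∉ G.neighborFinset u := by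
    simp [SimpleGraph.mem_neighborFinset, hnadj]
  have hScard : S.card = G.degree u + 1 := by
    rw [hS, card_insert_of_notMem hvnb]
    rfl
  set T := univ.filter fun π : Equiv.Perm (Fin n) => ∀ x, G.Adj u x → π x ≤ π v with hT
  set xf : Equiv.Perm (Fin n) → Fin n :=
    fun π => π.symm ((S.image π).max' (hSne.image π)) with hxf
  set f : Equiv.Perm (Fin n) → Fin n × Equiv.Perm (Fin n) :=
    fun π => (xf π, π * Equiv.swap v (xf π)) with hf
  have hmem : ∀ π : Equiv.Perm (Fin n), f π ∈ S ×ˢ T := by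
    intro π
    have hM := (S.image π).max'_mem (hSne.image π)
    obtain ⟨a, haS, ha⟩ := mem_image.1 hM
    have hπx : π (xf π) = (S.image π).max' (hSne.image π) := π.apply_symm_apply _
    have hx : xf π = a := π.injective (hπx.trans ha.symm)
    have hle : ∀ y ∈ S, π y ≤ (S.image π).max' (hSne.image π) :=
      fun y hy => le_max' _ _ (mem_image_of_mem π hy)
    have hfst : (f π).1 = a := hx
    refine mem_product.2 ⟨by rw [hfst]; exact haS, ?_⟩
    show (π * Equiv.swap v (xf π)) ∈ T
    rw [hT, mem_filter]
    refine ⟨mem_univ _, ?_⟩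
    intro y hy
    have hyv : y ≠ v := fun h => hnadj (h ▸ hy)
    have hyS : y ∈ S := mem_insert_of_mem (by rw [SimpleGraph.mem_neighborFinset]; exact hy)
    have hσv : (π * Equiv.swap v (xf π)) v = (S.image π).max' (hSne.image π) := by
      rw [Equiv.Perm.mul_apply, Equiv.swap_apply_left]; exact hπx
    rw [hσv]
    by_cases hya : y = a
    · simp only [Equiv.Perm.mul_apply, hx, hya, Equiv.swap_apply_right]
      exact hle v hvS
    · simp only [Equiv.Perm.mul_apply, hx, Equiv.swap_apply_of_ne_of_ne hyv hya]
      exact hle y hyS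
  have hinj : ∀ a ∈ (univ : Finset (Equiv.Perm (Fin n))), ∀ b ∈ univ, f a = f b → a = b := by
    intro π _ π' _ h
    have h1 : xf π = xf π' := congrArg Prod.fst h
    have h2 : π * Equiv.swap v (xf π) = π' * Equiv.swap v (xf π') := congrArg Prod.snd h
    rw [h1] at h2
    exact mul_right_cancel h2
  calc Fintype.card (Equiv.Perm (Fin n)) = (univ : Finset (Equiv.Perm (Fin n))).card :=
        card_univ.symm
    _ ≤ (S ×ˢ T).card := card_le_card_of_injOn f (fun a _ => hmem a)
        (fun a ha b hb h => hinj a (by simpa using ha) b (by simpa using hb) h)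
    _ = (G.degree u + 1) * T.card := by rw [card_product, hScard]

theorem stmt16 (n : ℕ) (G : SimpleGraph (Fin n)) [DecidableRel G.Adj]
    (u v : Fin n) (huv : u ≠ v) (hnadj : ¬ G.Adj u v) :
    (Nat.card {ω : Equiv.Perm (Fin n) × Finset (Fin n) //
        u ∈ ω.2 ∧ v ∉ ω.2 ∧ ∃ x, G.Adj u x ∧ x ∉ ω.2 ∧ ω.1 v < ω.1 x} : ℝ) /
      (Nat.card (Equiv.Perm (Fin n) × Finset (Fin n)) : ℝ)
      ≤ (1 / 4) * ((G.degree u : ℝ) / (G.degree u + 1)) := by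
  classical
  set d := G.degree u with hdeg
  set P := Fintype.card (Equiv.Perm (Fin n)) with hP
  set Np := (univ.filter fun π : Equiv.Perm (Fin n) => ∃ x, G.Adj u x ∧ π v < π x).card with hNp
  set NA := (univ.filter fun A : Finset (Fin n) => u ∈ A ∧ v ∉ A).card with hNA
  set E := (univ.filter fun ω : Equiv.Perm (Fin n) × Finset (Fin n) =>
      u ∈ ω.2 ∧ v ∉ ω.2 ∧ ∃ x, G.Adj u x ∧ x ∉ ω.2 ∧ ω.1 v < ω.1 x).card with hE
  -- event count
  have hEcard : Nat.card {ω : Equiv.Perm (Fin n) × Finset (Fin n) //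
      u ∈ ω.2 ∧ v ∉ ω.2 ∧ ∃ x, G.Adj u x ∧ x ∉ ω.2 ∧ ω.1 v < ω.1 x} = E := by
    rw [Nat.card_eq_fintype_card, Fintype.card_subtype]
  have hDcard : Nat.card (Equiv.Perm (Fin n) × Finset (Fin n)) = P * 2 ^ n := by
    rw [Nat.card_eq_fintype_card, Fintype.card_prod, Fintype.card_finset, Fintype.card_fin]
  -- event ≤ product
  have hprod : E ≤ Np * NA := by
    have hsub : (univ.filter fun ω : Equiv.Perm (Fin n) × Finset (Fin n) =>
        u ∈ ω.2 ∧ v ∉ ω.2 ∧ ∃ x, G.Adj u x ∧ x ∉ ω.2 ∧ ω.1 v < ω.1 x) ⊆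
        ((univ ×ˢ univ).filter fun ω : Equiv.Perm (Fin n) × Finset (Fin n) =>
          (∃ x, G.Adj u x ∧ ω.1 v < ω.1 x) ∧ (u ∈ ω.2 ∧ v ∉ ω.2)) := by
      intro ω hω
      simp only [mem_filter, mem_univ, true_and, mem_product, and_self] at *
      obtain ⟨h1, h2, x, hx1, _, hx3⟩ := hω
      exact ⟨⟨x, hx1, hx3⟩, h1, h2⟩
    calc E ≤ _ := card_le_card hsub
      _ = Np * NA := by
        have hfp := filter_product (s := (univ : Finset (Equiv.Perm (Fin n))))
          (t := (univ : Finset (Finset (Fin n))))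
          (fun π : Equiv.Perm (Fin n) => ∃ x, G.Adj u x ∧ π v < π x)
          (fun A : Finset (Fin n) => u ∈ A ∧ v ∉ A)
        rw [hfp, card_product, hNp, hNA]
  -- permutation split
  have hsplit : Np + (univ.filter fun π : Equiv.Perm (Fin n) =>
      ∀ x, G.Adj u x → π x ≤ π v).card = P := by
    have h1 := card_filter_add_card_filter_not
      (s := (univ : Finset (Equiv.Perm (Fin n))))
      (p := fun π : Equiv.Perm (Fin n) => ∃ x, G.Adj u x ∧ π v < π x)
    have h2 : (univ.filter fun π : Equiv.Perm (Fin n) => ¬∃ x, G.Adj u x ∧ π v < π x) =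
        (univ.filter fun π : Equiv.Perm (Fin n) => ∀ x, G.Adj u x → π x ≤ π v) := by
      apply filter_congr
      intro π _
      simp [not_lt, eq_iff_iff]
    rw [h2, card_univ] at h1
    rw [hNp, hP]
    exact h1
  have hNpbound : (d + 1) * Np ≤ d * P := by
    have h := perm_count G u v hnadj
    set T := (univ.filter fun π : Equiv.Perm (Fin n) => ∀ x, G.Adj u x → π x ≤ π v).card
    have h2 : (d + 1) * Np + P ≤ (d + 1) * Np + (d + 1) * T := Nat.add_le_add_left h _
    rw [← Nat.mul_add, hsplit] at h2
    have h3 : (d + 1) * P = d * P + P := by ring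
    rw [h3] at h2
    exact Nat.le_of_add_le_add_right h2
  have hNAcard : 4 * NA = 2 ^ n := finset_count u v huv
  -- combine to nat inequality
  have hnat : E * (4 * (d + 1)) ≤ d * (P * 2 ^ n) := by
    calc E * (4 * (d + 1)) ≤ (Np * NA) * (4 * (d + 1)) :=
          Nat.mul_le_mul_right _ hprod
      _ = ((d + 1) * Np) * (4 * NA) := by ring
      _ ≤ (d * P) * (2 ^ n) := by
          rw [hNAcard]
          exact Nat.mul_le_mul_right _ hNpbound
      _ = d * (P * 2 ^ n) := by ring
  -- pass to reals
  rw [hEcard, hDcard]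
  have hPpos : 0 < P := Fintype.card_pos
  have hDpos : (0 : ℝ) < ((P * 2 ^ n : ℕ) : ℝ) := by positivity
  have hd1 : ((d : ℝ) + 1) ≠ 0 := by positivity
  have hrhs : (1 / 4 : ℝ) * ((d : ℝ) / ((d : ℝ) + 1)) = (d : ℝ) / (4 * ((d : ℝ) + 1)) := by
    field_simp
  rw [hrhs, div_le_div_iff₀ hDpos (by positivity)]
  exact_mod_cast hnat
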